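/- Let T1, T2 be q-commuting contractions on H and T = T1T2. Then there exists a pair of bounded operators (G1, G2) on the defect space D_{T*} satisfying the fundamental equations D_{T*} G1 D_{T*} = T1* − T2 T* and D_{T*} G2 D_{T*} = T2* − q T1 T*, and this pair is unique. -/

import Mathlib

open ContinuousLinearMap

noncomputable section FundamentalAux

variable {H : Type*} [NormedAddCommGroup H] [InnerProductSpace ℂ H] [CompleteSpace H]

local notation "⟪" x ", " y "⟫" => @inner ℂ _ _ x y

private lemma norm_le_of_sq_le_sq {a b : ℝ} (hb : 0 ≤ b) (h : a ^ 2 ≤ b ^ 2) :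
    a ≤ b := by nlinarith [abs_nonneg a, le_abs_self a, sq_abs a]

private lemma sq_norm_aux (X Y : H →L[ℂ] H) (hX : IsSelfAdjoint X)
    (hXY : X * X = 1 - Y * adjoint Y) (x : H) :
    ‖X x‖ ^ 2 = ‖x‖ ^ 2 - ‖adjoint Y x‖ ^ 2 := by
  have h2 : ⟪x, (Y * adjoint Y) x⟫ = ⟪adjoint Y x, adjoint Y x⟫ := by
    have := adjoint_inner_right (adjoint Y) x (adjoint Y x)
    rw [adjoint_adjoint] at this
    simpa [mul_apply] using this
  have h1 : ⟪X x, X x⟫ = ⟪x, (X * X) x⟫ := by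
    nth_rewrite 1 [← hX.adjoint_eq]
    rw [adjoint_inner_left, ContinuousLinearMap.mul_apply]
  rw [hXY, sub_apply, ContinuousLinearMap.one_apply, inner_sub_right, h2, inner_self_eq_norm_sq_to_K,
    inner_self_eq_norm_sq_to_K, inner_self_eq_norm_sq_to_K] at h1
  exact_mod_cast h1

private lemma factor_through (D A : H →L[ℂ] H) (hb : ∀ h, ‖A h‖ ≤ ‖D h‖) :
    ∃ W : (LinearMap.range (D : H →ₗ[ℂ] H)).topologicalClosure →L[ℂ] H,
      ∀ (h : H) (x : (LinearMap.range (D : H →ₗ[ℂ] H)).topologicalClosure),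
        (x : H) = D h → W x = A h := by
  classical
  set R : Submodule ℂ H := LinearMap.range (D : H →ₗ[ℂ] H) with hRdef
  have hRM : R ≤ R.topologicalClosure := Submodule.le_topologicalClosure R
  have hker : ∀ h h' : H, D h = D h' → A h = A h' := by
    intro h h' hd
    have h1 : ‖A h - A h'‖ ≤ ‖D h - D h'‖ := by simpa [map_sub] using hb (h - h')
    rw [hd, sub_self, norm_zero] at h1
    exact sub_eq_zero.mp (norm_le_zero_iff.mp h1)
  have hsec : ∀ x : R, ∃ h : H, D h = (x : H) := by
    intro x
    obtain ⟨h, hh⟩ := x.2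
    exact ⟨h, hh⟩
  let f : R → H := fun x => A (hsec x).choose
  have hf : ∀ (x : R) (h : H), (x : H) = D h → f x = A h := by
    intro x h hx
    exact hker _ _ (by rw [(hsec x).choose_spec, hx])
  have hfd : ∀ x y : R, dist (f x) (f y) ≤ dist x y := by
    intro x y
    have h1 : D ((hsec x).choose - (hsec y).choose) = (x : H) - (y : H) := by
      rw [map_sub, (hsec x).choose_spec, (hsec y).choose_spec]
    calc dist (f x) (f y) = ‖A ((hsec x).choose - (hsec y).choose)‖ := by
          rw [dist_eq_norm, ← map_sub]
      _ ≤ ‖D ((hsec x).choose - (hsec y).choose)‖ := hb _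
      _ = dist x y := by rw [h1, Subtype.dist_eq, dist_eq_norm]
  have hfu : UniformContinuous f :=
    (LipschitzWith.of_dist_le_mul (K := 1) fun x y => by simpa using hfd x y).uniformContinuous
  let e : R → R.topologicalClosure := fun x => ⟨(x : H), hRM x.2⟩
  have he_isom : Isometry e :=
    Isometry.of_dist_eq fun x y => by rw [Subtype.dist_eq, Subtype.dist_eq]
  have he_dr : DenseRange e := by
    intro m
    have hm : (m : H) ∈ closure (R : Set H) := by
      rw [← Submodule.topologicalClosure_coe]; exact m.2
    rw [Metric.mem_closure_iff] at hm ⊢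
    intro ε hε
    obtain ⟨r, hr, hdr⟩ := hm ε hε
    exact ⟨e ⟨r, hr⟩, Set.mem_range_self _, by rwa [Subtype.dist_eq]⟩
  have he_ui : IsUniformInducing e := he_isom.isUniformInducing
  let g : R.topologicalClosure → H := (he_ui.isDenseInducing he_dr).extend f
  have hgc : Continuous g := (uniformContinuous_uniformly_extend he_ui he_dr hfu).continuous
  have hge : ∀ x : R, g (e x) = f x := fun x => uniformly_extend_of_ind he_ui he_dr hfu x
  have hgadd : ∀ x y : R.topologicalClosure, g (x + y) = g x + g y := by
    refine DenseRange.induction_on₂ he_dr ?_ ?_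
    · exact isClosed_eq (hgc.comp continuous_add)
        ((hgc.comp continuous_fst).add (hgc.comp continuous_snd))
    · intro a b
      have h1 : e a + e b = e (a + b) := rfl
      rw [h1, hge, hge, hge]
      have h2 : f (a + b) = A ((hsec a).choose + (hsec b).choose) :=
        hf _ _ (by rw [map_add, (hsec a).choose_spec, (hsec b).choose_spec]; rfl)
      rw [h2, map_add]
  have hgsmul : ∀ (c : ℂ) (x : R.topologicalClosure), g (c • x) = c • g x := by
    intro c x
    refine he_dr.induction_on x ?_ ?_
    · exact isClosed_eq (hgc.comp (continuous_const_smul c)) (hgc.const_smul c)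
    · intro a
      have h1 : c • e a = e (c • a) := rfl
      rw [h1, hge, hge]
      have h2 : f (c • a) = A (c • (hsec a).choose) :=
        hf _ _ (by rw [map_smul, (hsec a).choose_spec]; rfl)
      rw [h2, map_smul]
  refine ⟨⟨{ toFun := g, map_add' := hgadd, map_smul' := hgsmul }, hgc⟩, ?_⟩
  intro h x hx
  have hxR : (x : H) ∈ R := LinearMap.mem_range.mpr ⟨h, hx.symm⟩
  have hxe : x = e ⟨(x : H), hxR⟩ := Subtype.ext rfl
  show g x = A h
  rw [hxe, hge]
  exact hf _ h hx

end FundamentalAux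

set_option maxHeartbeats 1000000

/-- Existence and uniqueness of the fundamental operators: for `q`-commuting contractions
`T1, T2` with `T = T1 T2`, there is a unique pair `(G1, G2)` of bounded operators on the
defect space `𝒟_{T*}` (the closure of the range of `D_{T*}`) satisfying
`D_{T*} G1 D_{T*} = T1* − T2 T*` and `D_{T*} G2 D_{T*} = T2* − q T1 T*`. -/
theorem fundamental_operators_exist_unique
    {H : Type*} [NormedAddCommGroup H] [InnerProductSpace ℂ H] [CompleteSpace H]
    (q : ℂ) (hq : ‖q‖ = 1)
    (T1 T2 : H →L[ℂ] H) (hT1 : ‖T1‖ ≤ 1) (hT2 : ‖T2‖ ≤ 1)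
    (hcomm : T1 * T2 = q • (T2 * T1))
    (Dst : H →L[ℂ] H) (hDst : Dst.IsPositive)
    (hDstsq : Dst * Dst = 1 - (T1 * T2) * adjoint (T1 * T2))
    (M : Submodule ℂ H) (hM : M = (LinearMap.range (Dst : H →ₗ[ℂ] H)).topologicalClosure) :
    ∃! G : (M →L[ℂ] M) × (M →L[ℂ] M),
      (∀ (h : H) (x : M), (x : H) = Dst h →
        Dst ((G.1 x : M) : H) = (adjoint T1 - T2 * adjoint (T1 * T2)) h) ∧
      (∀ (h : H) (x : M), (x : H) = Dst h →
        Dst ((G.2 x : M) : H) = (adjoint T2 - q • (T1 * adjoint (T1 * T2))) h) := by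
  subst hM
  set R : Submodule ℂ H := LinearMap.range (Dst : H →ₗ[ℂ] H) with hRdef
  haveI : CompleteSpace R.topologicalClosure :=
    (Submodule.isClosed_topologicalClosure R).completeSpace_coe
  have hRM : R ≤ R.topologicalClosure := Submodule.le_topologicalClosure R
  have hDsa : IsSelfAdjoint Dst := hDst.isSelfAdjoint
  -- basic scalar and adjoint identities
  have hq1 : q * (starRingEnd ℂ) q = 1 := by
    rw [Complex.mul_conj]
    have : Complex.normSq q = 1 := by
      rw [Complex.normSq_eq_norm_sq, hq]; norm_num
    rw [this]; norm_num
  have hamul : adjoint (T1 * T2) = adjoint T2 * adjoint T1 := by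
    rw [← star_eq_adjoint, ← star_eq_adjoint, ← star_eq_adjoint, star_mul]
  have hstar21 : adjoint T2 * adjoint T1 = (starRingEnd ℂ) q • (adjoint T1 * adjoint T2) := by
    have h := congrArg star hcomm
    rw [star_mul, star_smul, star_mul] at h
    simpa [star_eq_adjoint, Complex.star_def] using h
  have h21 : ∀ h : H, adjoint T2 (adjoint T1 h)
      = (starRingEnd ℂ) q • adjoint T1 (adjoint T2 h) := by
    intro h
    have := ContinuousLinearMap.ext_iff.mp hstar21 h
    simpa [mul_apply, smul_apply] using this
  have h12 : ∀ h : H, adjoint T1 (adjoint T2 h) = q • adjoint T2 (adjoint T1 h) := by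
    intro h
    rw [h21 h, smul_smul, hq1, one_smul]
  have hTad : ∀ h : H, adjoint (T1 * T2) h = adjoint T2 (adjoint T1 h) := by
    intro h; rw [hamul, ContinuousLinearMap.mul_apply]
  have hT1a : ∀ x : H, ‖adjoint T1 x‖ ≤ ‖x‖ := by
    intro x
    calc ‖adjoint T1 x‖ ≤ ‖adjoint T1‖ * ‖x‖ := le_opNorm _ _
      _ ≤ 1 * ‖x‖ := by
          have hn : ‖adjoint T1‖ = ‖T1‖ := LinearIsometryEquiv.norm_map adjoint T1
          rw [hn]; exact mul_le_mul_of_nonneg_right hT1 (norm_nonneg x)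
      _ = ‖x‖ := one_mul _
  have hT2a : ∀ x : H, ‖adjoint T2 x‖ ≤ ‖x‖ := by
    intro x
    calc ‖adjoint T2 x‖ ≤ ‖adjoint T2‖ * ‖x‖ := le_opNorm _ _
      _ ≤ 1 * ‖x‖ := by
          have hn : ‖adjoint T2‖ = ‖T2‖ := LinearIsometryEquiv.norm_map adjoint T2
          rw [hn]; exact mul_le_mul_of_nonneg_right hT2 (norm_nonneg x)
      _ = ‖x‖ := one_mul _
  have nTad1 : ∀ h : H, ‖adjoint (T1 * T2) h‖ ≤ ‖adjoint T1 h‖ := by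
    intro h; rw [hTad]; exact hT2a _
  have nTad2 : ∀ h : H, ‖adjoint (T1 * T2) h‖ ≤ ‖adjoint T2 h‖ := by
    intro h
    rw [hTad, h21 h, norm_smul]
    have hcq : ‖(starRingEnd ℂ) q‖ = 1 := by rw [RCLike.norm_conj, hq]
    rw [hcq, one_mul]
    exact hT1a _
  have nD : ∀ h : H, ‖Dst h‖ ^ 2 = ‖h‖ ^ 2 - ‖adjoint (T1 * T2) h‖ ^ 2 :=
    sq_norm_aux Dst (T1 * T2) hDsa hDstsq
  -- the positive square roots
  have hQpos : ∀ Y : H →L[ℂ] H, (∀ x : H, ‖adjoint Y x‖ ≤ ‖x‖) →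
      (0 : H →L[ℂ] H) ≤ 1 - Y * adjoint Y := by
    intro Y hYa
    rw [nonneg_iff_isPositive, isPositive_iff_complex]
    intro x
    have key : (inner ℂ ((1 - Y * adjoint Y) x) x : ℂ)
        = ((‖x‖ ^ 2 - ‖adjoint Y x‖ ^ 2 : ℝ) : ℂ) := by
      rw [sub_apply, ContinuousLinearMap.one_apply, inner_sub_left, ContinuousLinearMap.mul_apply]
      have h2 : (inner ℂ (Y (adjoint Y x)) x : ℂ) = inner ℂ (adjoint Y x) (adjoint Y x) := by
        have := adjoint_inner_left (adjoint Y) x (adjoint Y x)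
        rwa [adjoint_adjoint] at this
      rw [h2, inner_self_eq_norm_sq_to_K, inner_self_eq_norm_sq_to_K]
      norm_cast
    rw [key]
    refine ⟨by norm_cast, ?_⟩
    have h0 : RCLike.re (((‖x‖ ^ 2 - ‖adjoint Y x‖ ^ 2 : ℝ)) : ℂ)
        = ‖x‖ ^ 2 - ‖adjoint Y x‖ ^ 2 := by norm_cast
    rw [h0]
    have := hYa x
    nlinarith [norm_nonneg (adjoint Y x), norm_nonneg x]
  have hQ2pos : (0 : H →L[ℂ] H) ≤ 1 - T2 * adjoint T2 := hQpos T2 hT2a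
  have hQ1pos : (0 : H →L[ℂ] H) ≤ 1 - T1 * adjoint T1 := hQpos T1 hT1a
  set S2 : H →L[ℂ] H := CFC.sqrt (1 - T2 * adjoint T2) with hS2def
  set S1 : H →L[ℂ] H := CFC.sqrt (1 - T1 * adjoint T1) with hS1def
  have hS2sq : S2 * S2 = 1 - T2 * adjoint T2 := CFC.sqrt_mul_sqrt_self _ hQ2pos
  have hS1sq : S1 * S1 = 1 - T1 * adjoint T1 := CFC.sqrt_mul_sqrt_self _ hQ1pos
  have hS2pos : (0 : H →L[ℂ] H) ≤ S2 := CFC.sqrt_nonneg (a := 1 - T2 * adjoint T2)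
  have hS1pos : (0 : H →L[ℂ] H) ≤ S1 := CFC.sqrt_nonneg (a := 1 - T1 * adjoint T1)
  have hS2sa : IsSelfAdjoint S2 := ((nonneg_iff_isPositive S2).mp hS2pos).isSelfAdjoint
  have hS1sa : IsSelfAdjoint S1 := ((nonneg_iff_isPositive S1).mp hS1pos).isSelfAdjoint
  have nS2 : ∀ x : H, ‖S2 x‖ ^ 2 = ‖x‖ ^ 2 - ‖adjoint T2 x‖ ^ 2 :=
    sq_norm_aux S2 T2 hS2sa hS2sq
  have nS1 : ∀ x : H, ‖S1 x‖ ^ 2 = ‖x‖ ^ 2 - ‖adjoint T1 x‖ ^ 2 :=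
    sq_norm_aux S1 T1 hS1sa hS1sq
  -- the four norm inequalities
  have ia : ∀ h : H, ‖(S2 ∘L adjoint T1) h‖ ≤ ‖Dst h‖ := by
    intro h
    refine norm_le_of_sq_le_sq (norm_nonneg _) ?_
    rw [comp_apply, nS2, nD]
    have e1 : ‖adjoint T2 (adjoint T1 h)‖ = ‖adjoint (T1 * T2) h‖ := by rw [hTad]
    rw [e1]
    have := hT1a h
    nlinarith [norm_nonneg (adjoint T1 h), norm_nonneg h]
  have ib : ∀ h : H, ‖S2 h‖ ≤ ‖Dst h‖ := by
    intro h
    refine norm_le_of_sq_le_sq (norm_nonneg _) ?_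
    rw [nS2, nD]
    have := nTad2 h
    nlinarith [norm_nonneg (adjoint (T1 * T2) h), norm_nonneg (adjoint T2 h)]
  have ic : ∀ h : H, ‖(S1 ∘L adjoint T2) h‖ ≤ ‖Dst h‖ := by
    intro h
    refine norm_le_of_sq_le_sq (norm_nonneg _) ?_
    rw [comp_apply, nS1, nD]
    have e1 : ‖adjoint T1 (adjoint T2 h)‖ = ‖adjoint (T1 * T2) h‖ := by
      rw [h12 h, norm_smul, hq, one_mul, hTad]
    rw [e1]
    have := hT2a h
    nlinarith [norm_nonneg (adjoint T2 h), norm_nonneg h]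
  have id' : ∀ h : H, ‖S1 h‖ ≤ ‖Dst h‖ := by
    intro h
    refine norm_le_of_sq_le_sq (norm_nonneg _) ?_
    rw [nS1, nD]
    have := nTad1 h
    nlinarith [norm_nonneg (adjoint (T1 * T2) h), norm_nonneg (adjoint T1 h)]
  -- the factored operators
  obtain ⟨C1, hC1⟩ := factor_through Dst (S2 ∘L adjoint T1) ia
  obtain ⟨C2, hC2⟩ := factor_through Dst S2 ib
  obtain ⟨C3, hC3⟩ := factor_through Dst (S1 ∘L adjoint T2) ic
  obtain ⟨C4, hC4⟩ := factor_through Dst S1 id'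
  -- existence
  have hG1 : ∀ (h : H) (x : R.topologicalClosure), (x : H) = Dst h →
      Dst (((adjoint C2 ∘L C1) x : R.topologicalClosure) : H)
        = (adjoint T1 - T2 * adjoint (T1 * T2)) h := by
    intro h x hx
    apply ext_inner_left ℂ
    intro v
    have hDv : Dst v ∈ R.topologicalClosure := hRM ⟨v, rfl⟩
    rw [comp_apply]
    calc (inner ℂ v (Dst ((adjoint C2) (C1 x) : H)) : ℂ)
        = inner ℂ (Dst v) ((adjoint C2) (C1 x) : H) := by
          nth_rewrite 1 [← hDsa.adjoint_eq]
          rw [adjoint_inner_right]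
      _ = inner ℂ (⟨Dst v, hDv⟩ : R.topologicalClosure) ((adjoint C2) (C1 x)) := by
          rw [Submodule.coe_inner]
      _ = inner ℂ (C2 ⟨Dst v, hDv⟩) (C1 x) := adjoint_inner_right C2 _ _
      _ = inner ℂ (S2 v) (S2 (adjoint T1 h)) := by
          rw [hC2 v ⟨Dst v, hDv⟩ rfl, hC1 h x hx, comp_apply]
      _ = inner ℂ v (S2 (S2 (adjoint T1 h))) := by
          nth_rewrite 1 [← hS2sa.adjoint_eq]
          rw [adjoint_inner_left]
      _ = inner ℂ v ((adjoint T1 - T2 * adjoint (T1 * T2)) h) := by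
          have hfin : S2 (S2 (adjoint T1 h)) = (adjoint T1 - T2 * adjoint (T1 * T2)) h := by
            have hm := ContinuousLinearMap.ext_iff.mp hS2sq (adjoint T1 h)
            rw [ContinuousLinearMap.mul_apply] at hm
            rw [hm, sub_apply, ContinuousLinearMap.one_apply, sub_apply, ContinuousLinearMap.mul_apply, ContinuousLinearMap.mul_apply, hTad]
          rw [hfin]
  have hG2 : ∀ (h : H) (x : R.topologicalClosure), (x : H) = Dst h →
      Dst (((adjoint C4 ∘L C3) x : R.topologicalClosure) : H)
        = (adjoint T2 - q • (T1 * adjoint (T1 * T2))) h := by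
    intro h x hx
    apply ext_inner_left ℂ
    intro v
    have hDv : Dst v ∈ R.topologicalClosure := hRM ⟨v, rfl⟩
    rw [comp_apply]
    calc (inner ℂ v (Dst ((adjoint C4) (C3 x) : H)) : ℂ)
        = inner ℂ (Dst v) ((adjoint C4) (C3 x) : H) := by
          nth_rewrite 1 [← hDsa.adjoint_eq]
          rw [adjoint_inner_right]
      _ = inner ℂ (⟨Dst v, hDv⟩ : R.topologicalClosure) ((adjoint C4) (C3 x)) := by
          rw [Submodule.coe_inner]
      _ = inner ℂ (C4 ⟨Dst v, hDv⟩) (C3 x) := adjoint_inner_right C4 _ _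
      _ = inner ℂ (S1 v) (S1 (adjoint T2 h)) := by
          rw [hC4 v ⟨Dst v, hDv⟩ rfl, hC3 h x hx, comp_apply]
      _ = inner ℂ v (S1 (S1 (adjoint T2 h))) := by
          nth_rewrite 1 [← hS1sa.adjoint_eq]
          rw [adjoint_inner_left]
      _ = inner ℂ v ((adjoint T2 - q • (T1 * adjoint (T1 * T2))) h) := by
          have hfin : S1 (S1 (adjoint T2 h))
              = (adjoint T2 - q • (T1 * adjoint (T1 * T2))) h := by
            have hm := ContinuousLinearMap.ext_iff.mp hS1sq (adjoint T2 h)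
            rw [ContinuousLinearMap.mul_apply] at hm
            rw [hm, sub_apply, ContinuousLinearMap.one_apply, sub_apply, smul_apply, ContinuousLinearMap.mul_apply, ContinuousLinearMap.mul_apply, hTad,
              ← map_smul, ← h12]
          rw [hfin]
  -- injectivity of Dst on the defect space, and density
  have hinj : ∀ m : R.topologicalClosure, Dst (m : H) = 0 → m = 0 := by
    intro m hm
    have hmem : (m : H) ∈ closure (R : Set H) := by
      rw [← Submodule.topologicalClosure_coe]; exact m.2
    have hsub : (R : Set H) ⊆ {y : H | (inner ℂ y (m : H) : ℂ) = 0} := by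
      rintro y ⟨h, rfl⟩
      show (inner ℂ (Dst h) (m : H) : ℂ) = 0
      nth_rewrite 1 [← hDsa.adjoint_eq]
      rw [adjoint_inner_left, hm, inner_zero_right]
    have hcl : IsClosed {y : H | (inner ℂ y (m : H) : ℂ) = 0} :=
      isClosed_eq (Continuous.inner continuous_id continuous_const) continuous_const
    have hz : (inner ℂ (m : H) (m : H) : ℂ) = 0 := closure_minimal hsub hcl hmem
    exact Subtype.ext (inner_self_eq_zero.mp hz)
  have hdense : Dense {x : R.topologicalClosure | (x : H) ∈ R} := by
    intro m
    rw [Metric.mem_closure_iff]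
    intro ε hε
    have hmem : (m : H) ∈ closure (R : Set H) := by
      rw [← Submodule.topologicalClosure_coe]; exact m.2
    obtain ⟨r, hr, hdr⟩ := Metric.mem_closure_iff.mp hmem ε hε
    exact ⟨⟨r, hRM hr⟩, hr, by rwa [Subtype.dist_eq]⟩
  -- conclusion
  refine ⟨⟨adjoint C2 ∘L C1, adjoint C4 ∘L C3⟩, ⟨hG1, hG2⟩, ?_⟩
  rintro ⟨K1, K2⟩ ⟨hK1, hK2⟩
  have key : ∀ (K : R.topologicalClosure →L[ℂ] R.topologicalClosure)
      (G : R.topologicalClosure →L[ℂ] R.topologicalClosure),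
      (∀ (h : H) (x : R.topologicalClosure), (x : H) = Dst h →
        Dst ((K x : R.topologicalClosure) : H) = Dst ((G x : R.topologicalClosure) : H)) →
      K = G := by
    intro K G hKG
    have heq : Set.EqOn ⇑K ⇑G {x : R.topologicalClosure | (x : H) ∈ R} := by
      intro x hx
      obtain ⟨h, hh⟩ := hx
      have hxd : (x : H) = Dst h := hh.symm
      have hsub : Dst ((K x : H) - (G x : H)) = 0 := by
        rw [map_sub, hKG h x hxd, sub_self]
      have : K x - G x = 0 := hinj (K x - G x) (by rwa [Submodule.coe_sub])
      exact sub_eq_zero.mp this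
    exact ContinuousLinearMap.ext fun y =>
      congrFun (Continuous.ext_on hdense K.continuous G.continuous heq) y
  have e1 : K1 = adjoint C2 ∘L C1 := by
    refine key K1 _ fun h x hxd => ?_
    rw [hK1 h x hxd, hG1 h x hxd]
  have e2 : K2 = adjoint C4 ∘L C3 := by
    refine key K2 _ fun h x hxd => ?_
    rw [hK2 h x hxd, hG2 h x hxd]
  exact Prod.ext e1 e2
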